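/- arXiv:1105.4122 — 7 statements merged into one kernel-verified Lean document; each statement's English description precedes it below -/
import Mathlib

section
/- Let K be a nonempty compact Hausdorff space and let μ : C(K) → ℝ be a normed functional with μ(0) = 0. Then: (a) any two members A, B of the family 𝒜_μ satisfy A ∩ B ≠ ∅ and A ∩ B ∈ 𝒜_μ (hence 𝒜_μ is closed under finite intersections); (b) the support S(μ) equals the intersection ⋂{A : A ∈ 𝒜_μ}; and (c) if in addition μ is weakly additive and monotone, then S(μ) ∈ 𝒜_μ. -/
open Set

variable {K : Type*} [TopologicalSpace K]

/-- A functional `μ` on `C(K, ℝ)` is *normed* if `μ 1 = 1`. -/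
def IsNormedFunctional (μ : C(K, ℝ) → ℝ) : Prop := μ 1 = 1

/-- `μ` is *weakly additive* if `μ (f + c·1) = μ f + c`. -/
def IsWeaklyAdditive (μ : C(K, ℝ) → ℝ) : Prop :=
  ∀ (f : C(K, ℝ)) (c : ℝ), μ (f + ContinuousMap.const K c) = μ f + c

/-- `μ` is *monotone* if `f ≤ g → μ f ≤ μ g`. -/
def IsMonotoneFunctional (μ : C(K, ℝ) → ℝ) : Prop :=
  ∀ f g : C(K, ℝ), f ≤ g → μ f ≤ μ g

/-- `μ` *preserves max*. -/
def PreservesMax (μ : C(K, ℝ) → ℝ) : Prop :=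
  ∀ f g : C(K, ℝ), μ (f ⊔ g) = max (μ f) (μ g)

/-- `μ` *preserves min*. -/
def PreservesMin (μ : C(K, ℝ) → ℝ) : Prop :=
  ∀ f g : C(K, ℝ), μ (f ⊓ g) = min (μ f) (μ g)

/-- `μ` *weakly preserves max*: `μ (max{f, c·1}) = max{μ f, c}`. -/
def WeaklyPreservesMax (μ : C(K, ℝ) → ℝ) : Prop :=
  ∀ (f : C(K, ℝ)) (c : ℝ), μ (f ⊔ ContinuousMap.const K c) = max (μ f) c

/-- `μ` *weakly preserves min*: `μ (min{f, c·1}) = min{μ f, c}`. -/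
def WeaklyPreservesMin (μ : C(K, ℝ) → ℝ) : Prop :=
  ∀ (f : C(K, ℝ)) (c : ℝ), μ (f ⊓ ContinuousMap.const K c) = min (μ f) c

/-- The support `S(μ)`: points `x` such that every open neighbourhood `O` of `x` admits
`f, g ∈ C(K)` agreeing off `O` with `μ f ≠ μ g`. -/
def functionalSupport (μ : C(K, ℝ) → ℝ) : Set K :=
  {x | ∀ O : Set K, IsOpen O → x ∈ O →
    ∃ f g : C(K, ℝ), (∀ y ∉ O, f y = g y) ∧ μ f ≠ μ g}

/-- The family `𝒜_μ` of nonempty closed sets `A` such that `μ f = μ g` whenever `f = g` on `A`. -/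
def AFamily (μ : C(K, ℝ) → ℝ) : Set (Set K) :=
  {A | A.Nonempty ∧ IsClosed A ∧
    ∀ f g : C(K, ℝ), (∀ x ∈ A, f x = g x) → μ f = μ g}

/-- The family `Λ_μ`. -/
def LFamily (μ : C(K, ℝ) → ℝ) : Set (Set K) :=
  {A | A.Nonempty ∧ IsClosed A ∧
    ∀ B : Set K, IsClosed B → A ∩ B = ∅ →
      ∃ g : C(K, ℝ), μ g = 0 ∧ (∀ x ∈ A, g x ≤ 0) ∧ ∀ x ∈ B, 0 < g x}

set_option linter.unusedSectionVars false


section Aux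
variable {K : Type*} [TopologicalSpace K]


lemma continuousOn_union_of_isClosed' {p : K → ℝ} {A B : Set K}
    (hA : IsClosed A) (hB : IsClosed B)
    (h1 : ContinuousOn p A) (h2 : ContinuousOn p B) :
    ContinuousOn p (A ∪ B) := by
  intro x _
  have : ContinuousWithinAt p A x ∧ ContinuousWithinAt p B x := by
    constructor
    · by_cases h : x ∈ A
      · exact h1 x h
      · exact continuousWithinAt_of_notMem_closure (by rwa [hA.closure_eq])
    · by_cases h : x ∈ B
      · exact h2 x h
      · exact continuousWithinAt_of_notMem_closure (by rwa [hB.closure_eq])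
  exact this.1.union this.2

lemma glue_exists' [CompactSpace K] [T2Space K] {A B : Set K}
    (hA : IsClosed A) (hB : IsClosed B) (f g : C(K, ℝ))
    (hfg : ∀ x ∈ A ∩ B, f x = g x) :
    ∃ h : C(K, ℝ), (∀ x ∈ A, h x = f x) ∧ (∀ x ∈ B, h x = g x) := by
  classical
  set p : K → ℝ := fun x => if x ∈ A then f x else g x with hp
  have hpA : ∀ x ∈ A, p x = f x := fun x hx => if_pos hx
  have hpB : ∀ x ∈ B, p x = g x := by
    intro x hx
    by_cases h : x ∈ A
    · simp only [p, if_pos h]; exact hfg x ⟨h, hx⟩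
    · simp only [p, if_neg h]
  have hcont : ContinuousOn p (A ∪ B) :=
    continuousOn_union_of_isClosed' hA hB
      ((f.continuous.continuousOn).congr hpA)
      ((g.continuous.continuousOn).congr hpB)
  obtain ⟨h, hh⟩ := ContinuousMap.exists_restrict_eq (Y := ℝ) (hA.union hB)
    ⟨(A ∪ B).restrict p, hcont.restrict⟩
  have hh' : ∀ x (hx : x ∈ A ∪ B), h x = p x := by
    intro x hx
    have := congrFun (congrArg DFunLike.coe hh) ⟨x, hx⟩
    exact this
  exact ⟨h, fun x hx => (hh' x (Or.inl hx)).trans (hpA x hx),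
    fun x hx => (hh' x (Or.inr hx)).trans (hpB x hx)⟩


section MainAux
variable [CompactSpace K] [T2Space K] [Nonempty K]
variable (μ : C(K, ℝ) → ℝ)

variable [CompactSpace K] [T2Space K] [Nonempty K]
variable (μ : C(K, ℝ) → ℝ)

lemma univ_mem_AFamily : (univ : Set K) ∈ AFamily μ := by
  refine ⟨univ_nonempty, isClosed_univ, fun f g h => ?_⟩
  have : f = g := ContinuousMap.ext fun x => h x (mem_univ x)
  rw [this]

lemma inter_AFamily (hnorm : μ 1 = 1) (hzero : μ 0 = 0)
    {A B : Set K} (hA : A ∈ AFamily μ) (hB : B ∈ AFamily μ) :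
    (A ∩ B).Nonempty ∧ A ∩ B ∈ AFamily μ := by
  obtain ⟨hAne, hAcl, hAprop⟩ := hA
  obtain ⟨hBne, hBcl, hBprop⟩ := hB
  have hne : (A ∩ B).Nonempty := by
    by_contra hcon
    rw [not_nonempty_iff_eq_empty] at hcon
    obtain ⟨u, hu0, hu1, -⟩ := exists_continuous_zero_one_of_isClosed hAcl hBcl
      (disjoint_iff_inter_eq_empty.mpr hcon)
    have h0 : μ u = μ 0 := hAprop u 0 (fun x hx => by simpa using hu0 hx)
    have h1 : μ u = μ 1 := hBprop u 1 (fun x hx => by simpa using hu1 hx)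
    rw [hzero] at h0; rw [hnorm] at h1
    exact one_ne_zero (h1.symm.trans h0)
  refine ⟨hne, hne, hAcl.inter hBcl, fun f g hfg => ?_⟩
  obtain ⟨h, hhA, hhB⟩ := glue_exists' hAcl hBcl f g hfg
  have h1 : μ h = μ f := hAprop h f hhA
  have h2 : μ h = μ g := hBprop h g hhB
  rw [← h1, h2]

lemma support_eq_sInter (hnorm : μ 1 = 1) (hzero : μ 0 = 0) :
    functionalSupport μ = ⋂₀ AFamily μ := by
  ext x
  constructor
  · intro hx A hA
    obtain ⟨hAne, hAcl, hAprop⟩ := hA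
    by_contra hxA
    obtain ⟨f, g, hfg, hne⟩ := hx Aᶜ hAcl.isOpen_compl hxA
    exact hne (hAprop f g (fun y hy => hfg y (by simpa using hy)))
  · intro hx O hO hxO
    by_cases hOc : Oᶜ = ∅
    · refine ⟨0, 1, fun y hy => absurd (show y ∈ Oᶜ from hy) (by simp [hOc]), ?_⟩
      rw [hzero, hnorm]; norm_num
    · have hne : (Oᶜ : Set K).Nonempty := nonempty_iff_ne_empty.mpr hOc
      have hOcl : IsClosed (Oᶜ : Set K) := hO.isClosed_compl
      have hnotmem : Oᶜ ∉ AFamily μ := by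
        intro hmem
        exact (notMem_compl_iff.mpr hxO : x ∉ Oᶜ) (hx _ hmem)
      have : ¬ ∀ f g : C(K, ℝ), (∀ y ∈ Oᶜ, f y = g y) → μ f = μ g := by
        intro hP
        exact hnotmem ⟨hne, hOcl, hP⟩
      push_neg at this
      obtain ⟨f, g, hfg, hμ⟩ := this
      exact ⟨f, g, fun y hy => hfg y hy, hμ⟩




lemma finset_inter_AFamily (hnorm : μ 1 = 1) (hzero : μ 0 = 0)
    {ι : Type*} [DecidableEq ι] (t : Finset ι) (s : ι → Set K)
    (hs : ∀ i ∈ t, s i ∈ AFamily μ) : (⋂ i ∈ t, s i) ∈ AFamily μ := by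
  revert hs
  induction t using Finset.induction_on with
  | empty => intro _; simpa using univ_mem_AFamily μ
  | @insert a u _ ih =>
    intro hs
    rw [Finset.set_biInter_insert]
    exact (inter_AFamily μ hnorm hzero (hs a (Finset.mem_insert_self a u))
      (ih (fun i hi => hs i (Finset.mem_insert_of_mem hi)))).2

lemma sInter_AFamily_nonempty (hnorm : μ 1 = 1) (hzero : μ 0 = 0) :
    (⋂₀ AFamily μ).Nonempty := by
  have hne : Nonempty (AFamily μ) := ⟨⟨univ, univ_mem_AFamily μ⟩⟩
  rw [sInter_eq_iInter]
  apply IsCompact.nonempty_iInter_of_directed_nonempty_isCompact_isClosed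
  · intro A B
    refine ⟨⟨A.1 ∩ B.1, (inter_AFamily μ hnorm hzero A.2 B.2).2⟩, inter_subset_left,
      inter_subset_right⟩
  · exact fun A => A.2.1
  · exact fun A => A.2.2.1.isCompact
  · exact fun A => A.2.2.1

lemma key_le (hnorm : μ 1 = 1) (hzero : μ 0 = 0)
    (hwa : IsWeaklyAdditive μ) (hmono : IsMonotoneFunctional μ)
    (f g : C(K, ℝ)) (hfg : ∀ x ∈ ⋂₀ AFamily μ, f x = g x) : μ f ≤ μ g := by
  classical
  rw [← sub_nonneg]
  by_contra hcon
  push_neg at hcon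
  set ε : ℝ := (μ f - μ g) / 2 with hε
  have hεpos : 0 < ε := by simp only [hε]; linarith
  -- the compact set where |f - g| ≥ ε
  set C : Set K := {x | ε ≤ |f x - g x|} with hC
  have hCcl : IsClosed C := by
    have : C = (fun x => |f x - g x|) ⁻¹' Ici ε := rfl
    rw [this]
    exact IsClosed.preimage (by continuity) isClosed_Ici
  have hCS : ∀ x ∈ C, x ∉ ⋂₀ AFamily μ := by
    intro x hx hxS
    have := hfg x hxS
    simp only [hC, mem_setOf_eq, this, sub_self, abs_zero] at hx
    linarith
  -- finite subcover
  have hcover : C ⊆ ⋃ A : AFamily μ, (A.1)ᶜ := by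
    intro x hx
    obtain ⟨A, hA, hxA⟩ := by
      have := hCS x hx
      rw [mem_sInter] at this
      push_neg at this
      exact this
    exact mem_iUnion.mpr ⟨⟨A, hA⟩, hxA⟩
  obtain ⟨t, ht⟩ := hCcl.isCompact.elim_finite_subcover
    (fun A : AFamily μ => (A.1)ᶜ) (fun A => A.2.2.1.isOpen_compl) hcover
  set A : Set K := ⋂ i ∈ t, (i : AFamily μ).1 with hA
  have hAmem : A ∈ AFamily μ := finset_inter_AFamily μ hnorm hzero t _ (fun i _ => i.2)
  have hsmall : ∀ x ∈ A, f x ≤ g x + ε := by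
    intro x hx
    by_cases hxC : x ∈ C
    · exfalso
      obtain ⟨i₀, hi₀t, hxi₀⟩ : ∃ i₀ ∈ t, x ∉ (i₀ : AFamily μ).1 := by
        have := ht hxC
        simp only [mem_iUnion, mem_compl_iff, exists_prop] at this
        exact this
      exact hxi₀ (mem_iInter₂.mp hx i₀ hi₀t)
    · have : |f x - g x| < ε := by
        by_contra h; push_neg at h; exact hxC h
      have := abs_lt.mp this
      linarith [this.2]
  -- h = f ⊓ (g + ε)
  set h : C(K, ℝ) := f ⊓ (g + ContinuousMap.const K ε) with hh
  have hhA : ∀ x ∈ A, h x = f x := by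
    intro x hx
    simp only [hh, ContinuousMap.inf_apply, ContinuousMap.add_apply,
      ContinuousMap.const_apply]
    exact min_eq_left (hsmall x hx)
  have h1 : μ h = μ f := hAmem.2.2 h f hhA
  have h2 : μ h ≤ μ g + ε := by
    have hle : h ≤ g + ContinuousMap.const K ε := by
      intro x
      simp only [hh, ContinuousMap.inf_apply, ContinuousMap.add_apply,
        ContinuousMap.const_apply]
      exact min_le_right _ _
    calc μ h ≤ μ (g + ContinuousMap.const K ε) := hmono _ _ hle
      _ = μ g + ε := hwa g ε
  rw [h1] at h2
  simp only [hε] at h2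
  linarith



end MainAux
end Aux

/-- for a normed functional `μ` with `μ 0 = 0` on a nonempty compact Hausdorff
space: (a) `𝒜_μ` is closed under (nonempty) binary intersections, (b) `S(μ) = ⋂ 𝒜_μ`,
(c) if moreover `μ` is weakly additive and monotone then `S(μ) ∈ 𝒜_μ`. -/
theorem statement0 {K : Type*} [TopologicalSpace K] [CompactSpace K] [T2Space K] [Nonempty K]
    (μ : C(K, ℝ) → ℝ) (hnorm : IsNormedFunctional μ) (hzero : μ 0 = 0) :
    (∀ A ∈ AFamily μ, ∀ B ∈ AFamily μ, (A ∩ B).Nonempty ∧ A ∩ B ∈ AFamily μ) ∧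
    functionalSupport μ = ⋂₀ AFamily μ ∧
    (IsWeaklyAdditive μ → IsMonotoneFunctional μ → functionalSupport μ ∈ AFamily μ) := by
  refine ⟨fun A hA B hB => inter_AFamily μ hnorm hzero hA hB,
    support_eq_sInter μ hnorm hzero, fun hwa hmono => ?_⟩
  rw [support_eq_sInter μ hnorm hzero]
  refine ⟨sInter_AFamily_nonempty μ hnorm hzero,
    isClosed_sInter (fun A hA => hA.2.1), fun f g hfg => ?_⟩
  exact le_antisymm (key_le μ hnorm hzero hwa hmono f g hfg)
    (key_le μ hnorm hzero hwa hmono g f (fun x hx => (hfg x hx).symm))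
end

section
/- Let K be a nonempty compact Hausdorff space and let μ : C(K) → ℝ be a normed, weakly additive, monotone functional. Then the support S(μ) is nonempty and μ(f) = μ(g) for all f, g ∈ C(K) that agree on S(μ); that is, S(μ) ∈ 𝒜_μ. -/
open Set

variable {K : Type*} [TopologicalSpace K]

section Aux

variable {K : Type*} [TopologicalSpace K] [CompactSpace K] [T2Space K]
variable {μ : C(K, ℝ) → ℝ}

/-- An open set is *null* for `μ` if functions agreeing off it have equal value. -/
def NullO (μ : C(K, ℝ) → ℝ) (O : Set K) : Prop :=
  ∀ f g : C(K, ℝ), (∀ y ∉ O, f y = g y) → μ f = μ g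

lemma notMem_support_iff {x : K} :
    x ∉ functionalSupport μ ↔ ∃ O : Set K, IsOpen O ∧ x ∈ O ∧ NullO μ O := by
  unfold functionalSupport NullO
  simp only [mem_setOf_eq]
  push_neg
  tauto

lemma lip (hwa : IsWeaklyAdditive μ) (hmono : IsMonotoneFunctional μ) (f g : C(K, ℝ)) :
    |μ f - μ g| ≤ dist f g := by
  have key : ∀ u v : C(K, ℝ), μ u - μ v ≤ dist u v := by
    intro u v
    have hle : u ≤ v + ContinuousMap.const K (dist u v) := by
      rw [ContinuousMap.le_def]
      intro x
      have h1 := ContinuousMap.dist_apply_le_dist (f := u) (g := v) x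
      rw [Real.dist_eq] at h1
      have h2 := (abs_le.mp h1).2
      simp only [ContinuousMap.add_apply, ContinuousMap.const_apply]
      linarith
    have h3 := hmono u _ hle
    rw [hwa] at h3
    linarith
  rw [abs_sub_le_iff]
  exact ⟨key f g, by rw [dist_comm]; exact key g f⟩

lemma clamp_spec (f g : C(K, ℝ)) (ε : ℝ) (hε : 0 ≤ ε) :
    ∃ f' : C(K, ℝ), (∀ x, |f x - g x| ≤ ε → f' x = f x) ∧ dist f' g ≤ ε := by
  refine ⟨(f ⊓ (g + ContinuousMap.const K ε)) ⊔ (g - ContinuousMap.const K ε), ?_, ?_⟩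
  · intro x hx
    obtain ⟨h1, h2⟩ := abs_le.mp hx
    simp only [ContinuousMap.sup_apply, ContinuousMap.inf_apply, ContinuousMap.add_apply,
      ContinuousMap.sub_apply, ContinuousMap.const_apply]
    rw [min_eq_left (by linarith), max_eq_left (by linarith)]
  · rw [ContinuousMap.dist_le hε]
    intro x
    rw [Real.dist_eq, abs_le]
    simp only [ContinuousMap.sup_apply, ContinuousMap.inf_apply, ContinuousMap.add_apply,
      ContinuousMap.sub_apply, ContinuousMap.const_apply]
    constructor
    · have := le_max_right (min (f x) (g x + ε)) (g x - ε)
      linarith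
    · have h1 : min (f x) (g x + ε) ≤ g x + ε := min_le_right _ _
      have h2 : max (min (f x) (g x + ε)) (g x - ε) ≤ g x + ε :=
        max_le h1 (by linarith)
      linarith

lemma null_union (hwa : IsWeaklyAdditive μ) (hmono : IsMonotoneFunctional μ)
    {O1 O2 : Set K} (h1o : IsOpen O1) (h2o : IsOpen O2)
    (h1 : NullO μ O1) (h2 : NullO μ O2) : NullO μ (O1 ∪ O2) := by
  intro f g hfg
  have key : ∀ ε : ℝ, 0 < ε → |μ f - μ g| ≤ ε := by
    intro ε hε
    set C : Set K := {x | ε ≤ |f x - g x|} with hCdef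
    have hCc : IsClosed C := by
      have : C = {x | ε ≤ |(f - g) x|} := by
        ext x; simp [hCdef, ContinuousMap.sub_apply]
      rw [this]
      exact isClosed_le continuous_const ((map_continuous (f - g)).abs)
    have hs : IsClosed (C \ O2) := hCc.inter (isClosed_compl_iff.mpr h2o)
    have hdisj : Disjoint (O1ᶜ) (C \ O2) := by
      rw [Set.disjoint_left]
      intro x hx hxC
      have hxU : x ∉ O1 ∪ O2 := by
        intro hu
        rcases hu with h | h
        · exact hx h
        · exact hxC.2 h
      have := hfg x hxU
      have hxC' : ε ≤ |f x - g x| := hxC.1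
      rw [this] at hxC'
      simp at hxC'
      linarith
    obtain ⟨φ, hφ0, hφ1, hφ01⟩ :=
      exists_continuous_zero_one_of_isClosed (isClosed_compl_iff.mpr h1o) hs hdisj
    set h : C(K, ℝ) := f + φ * (g - f) with hhdef
    have hh1 : ∀ y ∉ O1, h y = f y := by
      intro y hy
      have h0 : φ y = 0 := hφ0 hy
      simp [hhdef, h0]
    have hmf : μ h = μ f := h1 h f hh1
    have hh2 : ∀ y ∉ O2, |h y - g y| ≤ ε := by
      intro y hy
      obtain ⟨hl, hr⟩ := hφ01 y
      have heq : h y - g y = (1 - φ y) * (f y - g y) := by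
        simp [hhdef]; ring
      by_cases hyC : y ∈ C
      · have h1' : φ y = 1 := hφ1 ⟨hyC, hy⟩
        rw [heq, h1']
        simp [hε.le]
      · have hb : |f y - g y| ≤ ε := le_of_not_ge hyC
        rw [heq, abs_mul]
        have h1' : |1 - φ y| ≤ 1 := abs_le.mpr ⟨by linarith, by linarith⟩
        have := abs_nonneg (f y - g y)
        nlinarith
    obtain ⟨h', hfix, hdist⟩ := clamp_spec h g ε hε.le
    have hm2 : μ h' = μ h := h2 h' h (fun y hy => hfix y (hh2 y hy))
    have hlip := lip hwa hmono h' g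
    have : |μ f - μ g| = |μ h' - μ g| := by rw [hm2, hmf]
    rw [this]
    linarith
  have h0 : |μ f - μ g| ≤ 0 :=
    le_of_forall_pos_le_add (by intro ε hε; simpa using key ε hε)
  have := abs_nonneg (μ f - μ g)
  have : |μ f - μ g| = 0 := le_antisymm h0 this
  have := abs_eq_zero.mp this
  linarith

lemma null_biUnion (hwa : IsWeaklyAdditive μ) (hmono : IsMonotoneFunctional μ)
    {ι : Type*} (t : Finset ι) (O : ι → Set K) :
    (∀ i ∈ t, IsOpen (O i) ∧ NullO μ (O i)) → NullO μ (⋃ i ∈ t, O i) := by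
  classical
  induction t using Finset.induction_on with
  | empty =>
    intro _ f g hfg
    congr 1
    ext x
    exact hfg x (by simp)
  | @insert a s ha ih =>
    intro hyp
    rw [Finset.set_biUnion_insert]
    exact null_union hwa hmono (hyp a (Finset.mem_insert_self a s)).1
      (isOpen_biUnion fun i hi => (hyp i (Finset.mem_insert_of_mem hi)).1)
      (hyp a (Finset.mem_insert_self a s)).2
      (ih fun i hi => hyp i (Finset.mem_insert_of_mem hi))

lemma support_closed : IsClosed (functionalSupport μ) := by
  rw [← isOpen_compl_iff, isOpen_iff_mem_nhds]
  intro x hx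
  obtain ⟨O, hoO, hxO, hN⟩ := notMem_support_iff.mp hx
  rw [mem_nhds_iff]
  refine ⟨O, ?_, hoO, hxO⟩
  intro y hy
  exact notMem_support_iff.mpr ⟨O, hoO, hy, hN⟩

lemma eqOn_support (hwa : IsWeaklyAdditive μ) (hmono : IsMonotoneFunctional μ)
    (f g : C(K, ℝ)) (hfg : ∀ x ∈ functionalSupport μ, f x = g x) : μ f = μ g := by
  have key : ∀ ε : ℝ, 0 < ε → |μ f - μ g| ≤ ε := by
    intro ε hε
    set D : Set K := {x | ε ≤ |f x - g x|} with hDdef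
    have hD : IsClosed D := by
      have : D = {x | ε ≤ |(f - g) x|} := by
        ext x; simp [hDdef, ContinuousMap.sub_apply]
      rw [this]
      exact isClosed_le continuous_const ((map_continuous (f - g)).abs)
    have hDS : ∀ x ∈ D, x ∉ functionalSupport μ := by
      intro x hx hxS
      have := hfg x hxS
      have hx' : ε ≤ |f x - g x| := hx
      rw [this] at hx'
      simp at hx'
      linarith
    have hch : ∀ x : D, ∃ O : Set K, IsOpen O ∧ (x : K) ∈ O ∧ NullO μ O :=
      fun x => notMem_support_iff.mp (hDS x x.2)
    choose O hOopen hOmem hOnull using hch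
    obtain ⟨t, ht⟩ := (hD.isCompact).elim_finite_subcover O hOopen
      (fun x hx => mem_iUnion.mpr ⟨⟨x, hx⟩, hOmem _⟩)
    have hUnull : NullO μ (⋃ i ∈ t, O i) :=
      null_biUnion hwa hmono t O (fun i _ => ⟨hOopen i, hOnull i⟩)
    obtain ⟨f', hfix, hdist⟩ := clamp_spec f g ε hε.le
    have hmeq : μ f' = μ f := by
      apply hUnull f' f
      intro y hy
      apply hfix
      have hyD : y ∉ D := fun h => hy (ht h)
      exact le_of_not_ge hyD
    have hlip := lip hwa hmono f' g
    have : |μ f - μ g| = |μ f' - μ g| := by rw [hmeq]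
    rw [this]
    linarith
  have h0 : |μ f - μ g| ≤ 0 :=
    le_of_forall_pos_le_add (by intro ε hε; simpa using key ε hε)
  have h1 := abs_nonneg (μ f - μ g)
  have h2 : |μ f - μ g| = 0 := le_antisymm h0 h1
  have := abs_eq_zero.mp h2
  linarith

lemma support_nonempty [Nonempty K] (hnorm : IsNormedFunctional μ)
    (hwa : IsWeaklyAdditive μ) (hmono : IsMonotoneFunctional μ) :
    (functionalSupport μ).Nonempty := by
  by_contra h
  rw [not_nonempty_iff_eq_empty] at h
  have hch : ∀ x : K, ∃ O : Set K, IsOpen O ∧ x ∈ O ∧ NullO μ O := by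
    intro x
    apply notMem_support_iff.mp
    rw [h]
    exact notMem_empty x
  choose O ho hm hn using hch
  obtain ⟨t, ht⟩ := isCompact_univ.elim_finite_subcover O ho
    (fun x _ => mem_iUnion.mpr ⟨x, hm x⟩)
  have hUnull : NullO μ (⋃ i ∈ t, O i) :=
    null_biUnion hwa hmono t O (fun i _ => ⟨ho i, hn i⟩)
  have h10 : μ 1 = μ 0 := hUnull 1 0 (fun y hy => absurd (ht (mem_univ y)) hy)
  have h01 : μ ((0 : C(K, ℝ)) + ContinuousMap.const K 1) = μ 0 + 1 := hwa 0 1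
  have heq1 : (0 : C(K, ℝ)) + ContinuousMap.const K 1 = 1 := by
    ext x; simp
  rw [heq1] at h01
  rw [hnorm] at h10 h01
  linarith

end Aux

/-- for a normed, weakly additive, monotone functional `μ` on a nonempty compact
Hausdorff space, the support `S(μ)` is nonempty and `μ f = μ g` whenever `f = g` on `S(μ)`;
that is, `S(μ) ∈ 𝒜_μ`. -/
theorem statement1 {K : Type*} [TopologicalSpace K] [CompactSpace K] [T2Space K] [Nonempty K]
    (μ : C(K, ℝ) → ℝ) (hnorm : IsNormedFunctional μ) (hwa : IsWeaklyAdditive μ)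
    (hmono : IsMonotoneFunctional μ) :
    (functionalSupport μ).Nonempty ∧
    (∀ f g : C(K, ℝ), (∀ x ∈ functionalSupport μ, f x = g x) → μ f = μ g) ∧
    functionalSupport μ ∈ AFamily μ := by
  have hne := support_nonempty hnorm hwa hmono
  have heq := eqOn_support hwa hmono (μ := μ)
  exact ⟨hne, heq, hne, support_closed, heq⟩
end

section
/- Let K be a nonempty compact Hausdorff space and let μ : C(K) → ℝ be a normed, monotone, weakly additive functional that weakly preserves both max and min. Then for every f ∈ C(K), μ(f) = inf over A ∈ Λ_μ of sup{f(x) : x ∈ A}. -/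
open Set

variable {K : Type*} [TopologicalSpace K]

/-- for a normed, monotone, weakly additive functional `μ` weakly preserving
both max and min, `μ f = inf_{A ∈ Λ_μ} sup {f x : x ∈ A}`. -/
theorem statement2 {K : Type*} [TopologicalSpace K] [CompactSpace K] [T2Space K] [Nonempty K]
    (μ : C(K, ℝ) → ℝ) (hnorm : IsNormedFunctional μ) (hmono : IsMonotoneFunctional μ)
    (hwa : IsWeaklyAdditive μ) (hwmax : WeaklyPreservesMax μ) (hwmin : WeaklyPreservesMin μ) :
    ∀ f : C(K, ℝ), μ f = sInf ((fun A => sSup ((f : K → ℝ) '' A)) '' LFamily μ) := by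

  intro f
  have h0 : μ 0 = 0 := by
    have h := hwa 1 (-1)
    have he : (1 : C(K, ℝ)) + ContinuousMap.const K (-1) = 0 := by ext x; simp
    rw [he] at h
    rw [h, hnorm]; ring
  have hconst : ∀ c : ℝ, μ (ContinuousMap.const K c) = c := by
    intro c
    have h := hwa 0 c
    rw [zero_add] at h
    rw [h, h0, zero_add]
  set A0 : Set K := {x | f x ≤ μ f} with hA0def
  have hA0mem : A0 ∈ LFamily μ := by
    refine ⟨?_, ?_, ?_⟩
    · obtain ⟨x0, -, hx0⟩ := isCompact_univ.exists_isMinOn univ_nonempty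
        f.continuous.continuousOn
      refine ⟨x0, ?_⟩
      have hle : ContinuousMap.const K (f x0) ≤ f := by
        rw [ContinuousMap.le_def]
        intro x
        exact hx0 (mem_univ x)
      have := hmono _ _ hle
      rw [hconst] at this
      exact this
    · exact isClosed_le f.continuous continuous_const
    · intro B hB hdisj
      refine ⟨f + ContinuousMap.const K (-(μ f)), by rw [hwa]; ring, ?_, ?_⟩
      · intro x hx
        simp only [ContinuousMap.add_apply, ContinuousMap.const_apply]
        have : f x ≤ μ f := hx
        linarith
      · intro x hx
        have hxA : x ∉ A0 := by
          intro hxA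
          have : x ∈ A0 ∩ B := ⟨hxA, hx⟩
          rw [hdisj] at this
          exact this
        have : ¬ f x ≤ μ f := hxA
        simp only [ContinuousMap.add_apply, ContinuousMap.const_apply]
        linarith
  have hge : ∀ A ∈ LFamily μ, μ f ≤ sSup ((f : K → ℝ) '' A) := by
    intro A hA
    obtain ⟨hAne, hAcl, hAL⟩ := hA
    by_contra hlt
    push_neg at hlt
    set c := sSup ((f : K → ℝ) '' A) with hc
    set t := (c + μ f) / 2 with ht
    have hct : c < t := by rw [ht]; linarith
    have htm : t < μ f := by rw [ht]; linarith
    have hAle : ∀ x ∈ A, f x ≤ c := by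
      intro x hx
      exact le_csSup ((hAcl.isCompact.image f.continuous).bddAbove) ⟨x, hx, rfl⟩
    set B := (f : K → ℝ) ⁻¹' (Ici t) with hBdef
    have hBcl : IsClosed B := isClosed_Ici.preimage f.continuous
    have hdisj : A ∩ B = ∅ := by
      ext x
      simp only [mem_inter_iff, mem_empty_iff_false, iff_false, not_and]
      intro hxA hxB
      have h1 : f x ≤ c := hAle x hxA
      have h2 : t ≤ f x := hxB
      linarith
    obtain ⟨g, hg0, hgA, hgB⟩ := hAL B hBcl hdisj
    by_cases hBne : B.Nonempty
    · obtain ⟨x0, hx0B, hx0min⟩ := hBcl.isCompact.exists_isMinOn hBne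
        g.continuous.continuousOn
      set δ := g x0 with hδ
      have hδpos : 0 < δ := hgB x0 hx0B
      set s := min δ (μ f - t) with hs
      have hspos : 0 < s := lt_min hδpos (by linarith)
      set u := ((g ⊔ ContinuousMap.const K 0) ⊓ ContinuousMap.const K s)
        + ContinuousMap.const K t with hu
      have hμu : μ u = t := by
        rw [hu, hwa, hwmin, hwmax, hg0, max_self, min_eq_left hspos.le, zero_add]
      set fh := f ⊓ ContinuousMap.const K (t + s) with hfh
      have hμfh : μ fh = t + s := by
        rw [hfh, hwmin, min_eq_right]
        have : s ≤ μ f - t := min_le_right _ _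
        linarith
      have hle : fh ≤ u := by
        rw [ContinuousMap.le_def]
        intro x
        simp only [hfh, hu, ContinuousMap.inf_apply, ContinuousMap.sup_apply,
          ContinuousMap.add_apply, ContinuousMap.const_apply]
        by_cases hxB : x ∈ B
        · have hgx : δ ≤ g x := hx0min hxB
          have hsg : s ≤ g x := le_trans (min_le_left _ _) hgx
          have h1 : min (max (g x) 0) s = s := by
            rw [min_eq_right]
            exact le_trans hsg (le_max_left _ _)
          rw [h1]
          exact le_trans (min_le_right _ _) (by linarith)
        · have hfx : f x < t := by
            by_contra hcon
            push_neg at hcon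
            exact hxB hcon
          have h2 : 0 ≤ min (max (g x) 0) s := le_min (le_max_right _ _) hspos.le
          have := min_le_left (f x) (t + s)
          linarith
      have hfin := hmono _ _ hle
      rw [hμfh, hμu] at hfin
      linarith
    · have hflt : f ≤ ContinuousMap.const K t := by
        rw [ContinuousMap.le_def]
        intro x
        simp only [ContinuousMap.const_apply]
        by_contra hcon
        push_neg at hcon
        exact hBne ⟨x, hcon.le⟩
      have := hmono _ _ hflt
      rw [hconst] at this
      linarith
  have hA0sup : sSup ((f : K → ℝ) '' A0) ≤ μ f := by
    apply csSup_le (hA0mem.1.image _)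
    rintro y ⟨x, hx, rfl⟩
    exact hx
  have hbdd : BddBelow ((fun A => sSup ((f : K → ℝ) '' A)) '' LFamily μ) := by
    refine ⟨μ f, ?_⟩
    rintro b ⟨A, hA, rfl⟩
    exact hge A hA
  apply le_antisymm
  · refine le_csInf ⟨_, ⟨A0, hA0mem, rfl⟩⟩ ?_
    rintro b ⟨A, hA, rfl⟩
    exact hge A hA
  · exact (csInf_le hbdd ⟨A0, hA0mem, rfl⟩).trans hA0sup
end

section
/- Let K be a nonempty compact Hausdorff space and let μ : C(K) → ℝ be a normed, monotone, weakly additive functional that weakly preserves both max and min. Then a nonempty closed set A ⊆ K belongs to Λ_μ if and only if μ(f) ≠ 0 for every open set O with A ⊆ O and every f ∈ C_A(O). -/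
open Set

variable {K : Type*} [TopologicalSpace K]

/-- The family `C_A(O)` of continuous functions `f : K → [-1,0]` that are `-1` on the closure
of some open `U` with `A ⊆ U ⊆ cl U ⊆ O` and vanish off `O`. -/
def CFam {K : Type*} [TopologicalSpace K] (A O : Set K) : Set C(K, ℝ) :=
  {f | (∀ x, f x ∈ Set.Icc (-1 : ℝ) 0) ∧
    ∃ U : Set K, IsOpen U ∧ A ⊆ U ∧ closure U ⊆ O ∧
      (∀ x ∈ closure U, f x = -1) ∧ ∀ x ∉ O, f x = 0}

lemma mu_zero {K : Type*} [TopologicalSpace K] (μ : C(K, ℝ) → ℝ)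
    (hnorm : IsNormedFunctional μ) (hwa : IsWeaklyAdditive μ) : μ 0 = 0 := by
  have h := hwa 0 1
  have h1 : (0 : C(K, ℝ)) + ContinuousMap.const K 1 = 1 := by ext x; simp
  rw [h1, hnorm] at h
  linarith

/-- for a normed, monotone, weakly additive functional `μ` weakly preserving both
max and min, a nonempty closed `A` belongs to `Λ_μ` iff `μ f ≠ 0` for every open `O ⊇ A` and
every `f ∈ C_A(O)`. -/
theorem statement3 {K : Type*} [TopologicalSpace K] [CompactSpace K] [T2Space K] [Nonempty K]
    (μ : C(K, ℝ) → ℝ) (hnorm : IsNormedFunctional μ) (hmono : IsMonotoneFunctional μ)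
    (hwa : IsWeaklyAdditive μ) (hwmax : WeaklyPreservesMax μ) (hwmin : WeaklyPreservesMin μ)
    (A : Set K) (hA : A.Nonempty) (hAcl : IsClosed A) :
    A ∈ LFamily μ ↔ ∀ O : Set K, IsOpen O → A ⊆ O → ∀ f ∈ CFam A O, μ f ≠ 0 := by
  have hμ0 : μ 0 = 0 := mu_zero μ hnorm hwa
  constructor
  · rintro ⟨-, -, hL⟩ O hO hAO f ⟨hf01, U, hUopen, hAU, hclUO, hfU, hfO⟩
    by_cases hUc : Uᶜ.Nonempty
    · -- main case
      obtain ⟨g, hg0, hgA, hgB⟩ := hL Uᶜ hUopen.isClosed_compl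
        (by rw [Set.eq_empty_iff_forall_notMem]; rintro x ⟨hx1, hx2⟩; exact hx2 (hAU hx1))
      obtain ⟨x₀, hx₀, hmin0⟩ := (hUopen.isClosed_compl.isCompact).exists_isMinOn hUc
        g.continuous.continuousOn
      have hmin : ∀ x ∈ Uᶜ, g x₀ ≤ g x := fun x hx => hmin0 hx
      set δ : ℝ := g x₀ with hδdef
      have hδpos : 0 < δ := hgB x₀ hx₀
      set w : C(K, ℝ) :=
        (g ⊓ ContinuousMap.const K δ + ContinuousMap.const K (-δ)) ⊔ ContinuousMap.const K (-1)
        with hwdef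
      have hμw : μ w = max (-δ) (-1) := by
        rw [hwdef, hwmax, hwa, hwmin, hg0, min_eq_left hδpos.le]
        ring_nf
      have hfw : f ≤ w := by
        intro x
        show f x ≤ w x
        by_cases hx : x ∈ closure U
        · rw [hfU x hx]
          simp only [hwdef, ContinuousMap.sup_apply, ContinuousMap.const_apply]
          exact le_max_right _ _
        · have hxU : x ∈ Uᶜ := fun hxu => hx (subset_closure hxu)
          have hgx : δ ≤ g x := hmin x hxU
          have : w x = 0 := by
            simp only [hwdef, ContinuousMap.sup_apply, ContinuousMap.add_apply,
              ContinuousMap.inf_apply, ContinuousMap.const_apply]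
            rw [min_eq_right hgx]
            simp [le_of_lt hδpos]
          rw [this]
          exact (hf01 x).2
      have := hmono f w hfw
      rw [hμw] at this
      intro hf0
      rw [hf0] at this
      rcases le_or_gt (-δ) (-1) with h | h
      · rw [max_eq_right h] at this; linarith
      · rw [max_eq_left h.le] at this; linarith
    · -- U = univ, f ≡ -1
      have hU : U = Set.univ := by
        rw [Set.not_nonempty_iff_eq_empty, Set.compl_empty_iff] at hUc; exact hUc
      have hfe : f = (0 : C(K, ℝ)) + ContinuousMap.const K (-1) := by
        ext x
        have : x ∈ closure U := by rw [hU]; simp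
        simp [hfU x this]
      rw [hfe, hwa, hμ0]
      norm_num
  · intro h
    refine ⟨hA, hAcl, ?_⟩
    intro B hB hAB
    have hdisj : Disjoint A B := Set.disjoint_iff_inter_eq_empty.mpr hAB
    have hABc : A ⊆ Bᶜ := Set.disjoint_left.mp hdisj
    obtain ⟨V, hVopen, hAV, hclV⟩ := normal_exists_closure_subset hAcl hB.isOpen_compl hABc
    have hdisj2 : Disjoint (closure V) B :=
      Set.disjoint_left.mpr fun x hx hxB => hclV hx hxB
    obtain ⟨u, hu0, hu1, hu01⟩ := exists_continuous_zero_one_of_isClosed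
      isClosed_closure hB hdisj2
    set t : ℝ := μ u with htdef
    have ht0 : 0 ≤ t := by
      have : (0 : C(K, ℝ)) ≤ u := fun x => (hu01 x).1
      have := hmono 0 u this
      rw [hμ0] at this; exact this
    have ht1 : t < 1 := by
      rcases lt_or_ge t 1 with h' | h'
      · exact h'
      · exfalso
        have ht1' : t = 1 := le_antisymm (by
          have : u ≤ (1 : C(K, ℝ)) := fun x => (hu01 x).2
          have := hmono u 1 this
          rw [hnorm] at this; exact this) h'
        set f : C(K, ℝ) := u + ContinuousMap.const K (-1) with hfdef
        refine h Bᶜ hB.isOpen_compl hABc f ⟨?_, V, hVopen, hAV, hclV, ?_, ?_⟩ ?_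
        · intro x
          constructor
          · simp only [hfdef, ContinuousMap.add_apply, ContinuousMap.const_apply]
            linarith [(hu01 x).1]
          · simp only [hfdef, ContinuousMap.add_apply, ContinuousMap.const_apply]
            linarith [(hu01 x).2]
        · intro x hx
          simp only [hfdef, ContinuousMap.add_apply, ContinuousMap.const_apply]
          have : u x = 0 := hu0 hx
          rw [this]; ring
        · intro x hx
          simp only [hfdef, ContinuousMap.add_apply, ContinuousMap.const_apply]
          have hxB : x ∈ B := by simpa using hx
          have : u x = 1 := hu1 hxB
          rw [this]; ring
        · rw [hfdef, hwa, ← htdef, ht1']; ring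
    refine ⟨u + ContinuousMap.const K (-t), ?_, ?_, ?_⟩
    · rw [hwa]; ring
    · intro x hx
      simp only [ContinuousMap.add_apply, ContinuousMap.const_apply]
      have : u x = 0 := hu0 (subset_closure (hAV hx))
      rw [this]; linarith
    · intro x hx
      simp only [ContinuousMap.add_apply, ContinuousMap.const_apply]
      have : u x = 1 := hu1 hx
      rw [this]; linarith
end

section
/- Let K be a nonempty compact Hausdorff space and let μ : C(K) → ℝ be a normed, monotone, weakly additive functional that weakly preserves both max and min. Then s(μ) := {x ∈ K : {x} ∈ Λ_μ} is a closed subset of the support S(μ). Moreover, if μ preserves min, then A ∩ s(μ) ≠ ∅ for every A ∈ Λ_μ. -/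
open Set

variable {K : Type*} [TopologicalSpace K]

set_option linter.unusedSectionVars false

section Aux4

variable [CompactSpace K] [T2Space K] [Nonempty K]
variable {μ : C(K, ℝ) → ℝ}

lemma st4_const (hnorm : μ 1 = 1)
    (hwa : ∀ (f : C(K, ℝ)) (c : ℝ), μ (f + ContinuousMap.const K c) = μ f + c) :
    ∀ c : ℝ, μ (ContinuousMap.const K c) = c := by
  have h0 : μ 0 = 0 := by
    have h := hwa 0 1
    have e : (0 : C(K, ℝ)) + ContinuousMap.const K 1 = 1 := by ext x; simp
    rw [e, hnorm] at h
    linarith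
  intro c
  have h := hwa 0 c
  have e : (0 : C(K, ℝ)) + ContinuousMap.const K c = ContinuousMap.const K c := by ext x; simp
  rw [e, h0] at h
  linarith [h]

lemma st4_zero (hnorm : μ 1 = 1)
    (hwa : ∀ (f : C(K, ℝ)) (c : ℝ), μ (f + ContinuousMap.const K c) = μ f + c) :
    μ 0 = 0 := by
  have := st4_const hnorm hwa 0
  have e : ContinuousMap.const K (0:ℝ) = 0 := by ext x; simp
  rwa [e] at this

/-- Doubling lemma: if `u ≥ 0` and `μ u = 0` then `μ (2 • u) = 0`. -/
lemma st4_double (hnorm : μ 1 = 1)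
    (hmono : ∀ f g : C(K, ℝ), f ≤ g → μ f ≤ μ g)
    (hwa : ∀ (f : C(K, ℝ)) (c : ℝ), μ (f + ContinuousMap.const K c) = μ f + c)
    (hwmax : ∀ (f : C(K, ℝ)) (c : ℝ), μ (f ⊔ ContinuousMap.const K c) = max (μ f) c)
    (hwmin : ∀ (f : C(K, ℝ)) (c : ℝ), μ (f ⊓ ContinuousMap.const K c) = min (μ f) c)
    {u : C(K, ℝ)} (hu : ∀ x, 0 ≤ u x) (h0 : μ u = 0) :
    μ ((2:ℝ) • u) = 0 := by
  set a := μ ((2:ℝ) • u) with ha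
  have ha0 : 0 ≤ a := by
    rw [← st4_zero hnorm hwa]
    apply hmono
    rw [ContinuousMap.le_def]
    intro x
    simp only [ContinuousMap.zero_apply, ContinuousMap.smul_apply, smul_eq_mul]
    nlinarith [hu x]
  rcases eq_or_lt_of_le ha0 with heq | hlt
  · exact heq.symm
  · exfalso
    set u' := u ⊓ ContinuousMap.const K (a/2) with hu'
    have hu'μ : μ u' = 0 := by
      rw [hu', hwmin, h0, min_eq_left (by linarith)]
    have hu'x : ∀ x, u' x = min (u x) (a/2) := by
      intro x; simp [hu']
    have h2u' : (2:ℝ) • u' = ((2:ℝ) • u) ⊓ ContinuousMap.const K a := by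
      ext x
      simp only [ContinuousMap.smul_apply, ContinuousMap.inf_apply,
        ContinuousMap.const_apply, smul_eq_mul, hu'x]
      rcases le_total (u x) (a/2) with h | h
      · rw [min_eq_left h, min_eq_left (by linarith)]
      · rw [min_eq_right h, min_eq_right (by linarith)]
        ring
    have hμ2u' : μ ((2:ℝ) • u') = a := by
      rw [h2u', hwmin, ← ha, min_self]
    have hkey : ((2:ℝ) • u') ⊔ ContinuousMap.const K (a/2)
        ≤ u' + ContinuousMap.const K (a/2) := by
      rw [ContinuousMap.le_def]
      intro x
      simp only [ContinuousMap.sup_apply, ContinuousMap.add_apply,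
        ContinuousMap.smul_apply, ContinuousMap.const_apply, smul_eq_mul, hu'x]
      have h1 : 0 ≤ min (u x) (a/2) := le_min (hu x) (by linarith)
      have h2 : min (u x) (a/2) ≤ a/2 := min_le_right _ _
      apply max_le <;> linarith
    have hle := hmono _ _ hkey
    rw [hwmax, hμ2u', hwa, hu'μ, max_eq_left (by linarith)] at hle
    linarith

/-- Scaling lemma: if `u ≥ 0` and `μ u = 0` then `μ (t • u) = 0` for `t ≥ 0`. -/
lemma st4_scale (hnorm : μ 1 = 1)
    (hmono : ∀ f g : C(K, ℝ), f ≤ g → μ f ≤ μ g)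
    (hwa : ∀ (f : C(K, ℝ)) (c : ℝ), μ (f + ContinuousMap.const K c) = μ f + c)
    (hwmax : ∀ (f : C(K, ℝ)) (c : ℝ), μ (f ⊔ ContinuousMap.const K c) = max (μ f) c)
    (hwmin : ∀ (f : C(K, ℝ)) (c : ℝ), μ (f ⊓ ContinuousMap.const K c) = min (μ f) c)
    {u : C(K, ℝ)} (hu : ∀ x, 0 ≤ u x) (h0 : μ u = 0) {t : ℝ} (ht : 0 ≤ t) :
    μ (t • u) = 0 := by
  have hpow : ∀ n : ℕ, μ (((2:ℝ)^n) • u) = 0 := by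
    intro n
    induction n with
    | zero => simpa using h0
    | succ n ih =>
      have e : ((2:ℝ)^(n+1)) • u = (2:ℝ) • (((2:ℝ)^n) • u) := by
        rw [smul_smul]; ring_nf
      rw [e]
      refine st4_double hnorm hmono hwa hwmax hwmin (fun x => ?_) ih
      simp only [ContinuousMap.smul_apply, smul_eq_mul]
      exact mul_nonneg (by positivity) (hu x)
  obtain ⟨n, hn⟩ := pow_unbounded_of_one_lt t (one_lt_two (α := ℝ))
  have hle1 : μ (t • u) ≤ 0 := by
    rw [← hpow n]
    apply hmono
    rw [ContinuousMap.le_def]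
    intro x
    simp only [ContinuousMap.smul_apply, smul_eq_mul]
    exact mul_le_mul_of_nonneg_right hn.le (hu x)
  have hle2 : 0 ≤ μ (t • u) := by
    rw [← st4_zero hnorm hwa]
    apply hmono
    rw [ContinuousMap.le_def]
    intro x
    simp only [ContinuousMap.zero_apply, ContinuousMap.smul_apply, smul_eq_mul]
    exact mul_nonneg ht (hu x)
  linarith

/-- Main lemma: if `A ∈ Λ_μ` and `μ h = 0` then `h` is nonnegative somewhere on `A`. -/
lemma st4_main (hnorm : μ 1 = 1)
    (hmono : ∀ f g : C(K, ℝ), f ≤ g → μ f ≤ μ g)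
    (hwa : ∀ (f : C(K, ℝ)) (c : ℝ), μ (f + ContinuousMap.const K c) = μ f + c)
    (hwmax : ∀ (f : C(K, ℝ)) (c : ℝ), μ (f ⊔ ContinuousMap.const K c) = max (μ f) c)
    (hwmin : ∀ (f : C(K, ℝ)) (c : ℝ), μ (f ⊓ ContinuousMap.const K c) = min (μ f) c)
    {A : Set K} (hAne : A.Nonempty) (hAcl : IsClosed A)
    (hAΛ : ∀ B : Set K, IsClosed B → A ∩ B = ∅ →
      ∃ g : C(K, ℝ), μ g = 0 ∧ (∀ x ∈ A, g x ≤ 0) ∧ ∀ x ∈ B, 0 < g x)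
    {h : C(K, ℝ)} (hh : μ h = 0) :
    ∃ x ∈ A, 0 ≤ h x := by
  by_contra hc
  push_neg at hc
  obtain ⟨x₀, hx₀A, hx₀max⟩ := hAcl.isCompact.exists_isMaxOn hAne h.continuous.continuousOn
  set δ : ℝ := -(h x₀) with hδ
  have hδpos : 0 < δ := by
    have := hc x₀ hx₀A; simp only [hδ]; linarith
  set B : Set K := h ⁻¹' Ici (-(δ/2)) with hB
  have hBcl : IsClosed B := isClosed_Ici.preimage h.continuous
  have hABdisj : A ∩ B = ∅ := by
    rw [eq_empty_iff_forall_notMem]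
    rintro x ⟨hxA, hxB⟩
    have h1 : h x ≤ h x₀ := hx₀max hxA
    have h2 : -(δ/2) ≤ h x := hxB
    linarith
  obtain ⟨g, hgμ, hgA, hgB⟩ := hAΛ B hBcl hABdisj
  by_cases hBne : B.Nonempty
  · obtain ⟨y₀, hy₀B, hy₀min⟩ := hBcl.isCompact.exists_isMinOn hBne g.continuous.continuousOn
    set η : ℝ := g y₀ with hη
    have hηpos : 0 < η := hgB y₀ hy₀B
    set u : C(K, ℝ) := (g ⊔ ContinuousMap.const K 0) ⊓ ContinuousMap.const K η with hu
    have huμ : μ u = 0 := by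
      rw [hu, hwmin, hwmax, hgμ, max_self, min_eq_left hηpos.le]
    have hux : ∀ x, u x = min (max (g x) 0) η := by intro x; simp [hu]
    have hu0 : ∀ x, 0 ≤ u x := by
      intro x; rw [hux]; exact le_min (le_max_right _ _) hηpos.le
    have huB : ∀ x ∈ B, u x = η := by
      intro x hx
      have : η ≤ g x := hy₀min hx
      rw [hux, min_eq_right (le_max_of_le_left this)]
    obtain ⟨z, _, hzmax⟩ := isCompact_univ.exists_isMaxOn univ_nonempty h.continuous.continuousOn
    set M : ℝ := h z with hM
    set t : ℝ := (max M 0 + δ/2) / η with htdef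
    have htpos : 0 ≤ t := by
      apply div_nonneg _ hηpos.le
      have : (0:ℝ) ≤ max M 0 := le_max_right _ _
      linarith
    have htη : t * η = max M 0 + δ/2 := div_mul_cancel₀ _ hηpos.ne'
    have hdom : h ≤ t • u + ContinuousMap.const K (-(δ/2)) := by
      rw [ContinuousMap.le_def]
      intro x
      simp only [ContinuousMap.add_apply, ContinuousMap.smul_apply,
        ContinuousMap.const_apply, smul_eq_mul]
      by_cases hx : x ∈ B
      · rw [huB x hx, htη]
        have h1 : h x ≤ M := hzmax (mem_univ x)
        have h2 : M ≤ max M 0 := le_max_left _ _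
        linarith
      · have hxlt : h x < -(δ/2) := by
          by_contra hcon
          exact hx (by simpa [hB] using le_of_not_gt hcon)
        have : 0 ≤ t * u x := mul_nonneg htpos (hu0 x)
        linarith
    have hfin := hmono _ _ hdom
    rw [hwa, st4_scale hnorm hmono hwa hwmax hwmin hu0 huμ htpos, hh] at hfin
    linarith
  · -- B empty: h < -δ/2 everywhere, contradicting μ h = 0
    have hlt : ∀ x, h x ≤ -(δ/2) := by
      intro x
      by_contra hcon
      exact hBne ⟨x, by simpa [hB] using le_of_not_ge hcon⟩
    have : μ h ≤ -(δ/2) := by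
      have hle : h ≤ ContinuousMap.const K (-(δ/2)) := by
        rw [ContinuousMap.le_def]; intro x; simpa using hlt x
      have := hmono _ _ hle
      rwa [st4_const hnorm hwa] at this
    linarith

/-- If `μ f ≤ f x` for all `f`, then `{x} ∈ Λ_μ`. -/
lemma st4_singleton (hnorm : μ 1 = 1)
    (hmono : ∀ f g : C(K, ℝ), f ≤ g → μ f ≤ μ g)
    (hwa : ∀ (f : C(K, ℝ)) (c : ℝ), μ (f + ContinuousMap.const K c) = μ f + c)
    {x : K} (hx : ∀ f : C(K, ℝ), μ f ≤ f x) :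
    {x} ∈ LFamily μ := by
  refine ⟨singleton_nonempty x, isClosed_singleton, ?_⟩
  intro B hBcl hdisj
  have hxB : x ∉ B := by
    intro hxB
    rw [eq_empty_iff_forall_notMem] at hdisj
    exact hdisj x ⟨mem_singleton x, hxB⟩
  obtain ⟨g, hg0, hg1, hg01⟩ := exists_continuous_zero_one_of_isClosed
    isClosed_singleton hBcl (disjoint_singleton_left.mpr hxB)
  have hgx : g x = 0 := hg0 (mem_singleton x)
  refine ⟨g, ?_, ?_, ?_⟩
  · apply le_antisymm
    · have := hx g
      rwa [hgx] at this
    · rw [← st4_zero hnorm hwa]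
      apply hmono
      rw [ContinuousMap.le_def]
      intro y
      simpa using (hg01 y).1
  · intro y hy
    rw [mem_singleton_iff] at hy
    rw [hy, hgx]
  · intro y hy
    have := hg1 hy
    simp only [Pi.one_apply] at this
    rw [this]
    norm_num

/-- Characterization: `{x} ∈ Λ_μ ↔ ∀ f, μ f ≤ f x`. -/
lemma st4_mem_iff (hnorm : μ 1 = 1)
    (hmono : ∀ f g : C(K, ℝ), f ≤ g → μ f ≤ μ g)
    (hwa : ∀ (f : C(K, ℝ)) (c : ℝ), μ (f + ContinuousMap.const K c) = μ f + c)
    (hwmax : ∀ (f : C(K, ℝ)) (c : ℝ), μ (f ⊔ ContinuousMap.const K c) = max (μ f) c)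
    (hwmin : ∀ (f : C(K, ℝ)) (c : ℝ), μ (f ⊓ ContinuousMap.const K c) = min (μ f) c)
    {x : K} :
    {x} ∈ LFamily μ ↔ ∀ f : C(K, ℝ), μ f ≤ f x := by
  constructor
  · rintro ⟨_, _, hΛ⟩ f
    have hμ0 : μ (f + ContinuousMap.const K (-(μ f))) = 0 := by
      rw [hwa]; ring
    obtain ⟨y, hy, h0⟩ := st4_main hnorm hmono hwa hwmax hwmin
      (singleton_nonempty x) isClosed_singleton hΛ hμ0
    rw [mem_singleton_iff] at hy
    subst hy
    simp only [ContinuousMap.add_apply, ContinuousMap.const_apply] at h0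
    linarith
  · exact st4_singleton hnorm hmono hwa

end Aux4

/-- for a normed, monotone, weakly additive functional `μ` weakly preserving both
max and min, the set `s(μ) = {x : {x} ∈ Λ_μ}` is a closed subset of `S(μ)`; moreover, if `μ`
preserves min then every `A ∈ Λ_μ` meets `s(μ)`. -/
theorem statement4 {K : Type*} [TopologicalSpace K] [CompactSpace K] [T2Space K] [Nonempty K]
    (μ : C(K, ℝ) → ℝ) (hnorm : IsNormedFunctional μ) (hmono : IsMonotoneFunctional μ)
    (hwa : IsWeaklyAdditive μ) (hwmax : WeaklyPreservesMax μ) (hwmin : WeaklyPreservesMin μ) :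
    IsClosed {x : K | {x} ∈ LFamily μ} ∧
    {x : K | {x} ∈ LFamily μ} ⊆ functionalSupport μ ∧
    (PreservesMin μ → ∀ A ∈ LFamily μ, (A ∩ {x : K | {x} ∈ LFamily μ}).Nonempty) := by
  refine ⟨?_, ?_, ?_⟩
  · -- s(μ) is closed
    have e : {x : K | {x} ∈ LFamily μ} = ⋂ f : C(K, ℝ), f ⁻¹' Ici (μ f) := by
      ext x
      simp only [mem_setOf_eq, mem_iInter, mem_preimage, mem_Ici]
      exact st4_mem_iff hnorm hmono hwa hwmax hwmin
    rw [e]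
    exact isClosed_iInter fun f => isClosed_Ici.preimage f.continuous
  · -- s(μ) ⊆ S(μ)
    intro x hx O hO hxO
    obtain ⟨_, _, hΛ⟩ := hx
    by_cases hB : (Oᶜ).Nonempty
    · have hdisj : {x} ∩ Oᶜ = ∅ := by
        rw [eq_empty_iff_forall_notMem]
        rintro y ⟨hy, hy'⟩
        rw [mem_singleton_iff] at hy
        subst hy
        exact hy' hxO
      obtain ⟨g, hgμ, _, hgB⟩ := hΛ Oᶜ hO.isClosed_compl hdisj
      obtain ⟨y₀, hy₀B, hy₀min⟩ := hO.isClosed_compl.isCompact.exists_isMinOn hB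
        g.continuous.continuousOn
      set η : ℝ := g y₀ with hη
      have hηpos : 0 < η := hgB y₀ hy₀B
      set u : C(K, ℝ) := (g ⊔ ContinuousMap.const K 0) ⊓ ContinuousMap.const K η with hu
      have huμ : μ u = 0 := by
        rw [hu, hwmin, hwmax, hgμ, max_self, min_eq_left hηpos.le]
      refine ⟨u, ContinuousMap.const K η, ?_, ?_⟩
      · intro y hy
        have hyB : y ∈ Oᶜ := hy
        have : η ≤ g y := hy₀min hyB
        simp only [hu, ContinuousMap.inf_apply, ContinuousMap.sup_apply,
          ContinuousMap.const_apply]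
        rw [min_eq_right (le_max_of_le_left this)]
      · rw [huμ, st4_const hnorm hwa]
        exact fun h => hηpos.ne h
    · refine ⟨0, ContinuousMap.const K 1, ?_, ?_⟩
      · intro y hy
        exact absurd ⟨y, hy⟩ hB
      · rw [st4_zero hnorm hwa, st4_const hnorm hwa]
        norm_num
  · -- min-preserving case
    intro hpm A hA
    obtain ⟨hAne, hAcl, hAΛ⟩ := hA
    haveI : Nonempty C(K, ℝ) := ⟨0⟩
    set Z : C(K, ℝ) → Set K := fun f => A ∩ f ⁻¹' Ici (μ f) with hZ
    have hZcl : ∀ f, IsClosed (Z f) := fun f =>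
      hAcl.inter (isClosed_Ici.preimage f.continuous)
    have hZcp : ∀ f, IsCompact (Z f) := fun f => (hZcl f).isCompact
    have hZne : ∀ f, (Z f).Nonempty := by
      intro f
      have hμ0 : μ (f + ContinuousMap.const K (-(μ f))) = 0 := by rw [hwa]; ring
      obtain ⟨y, hy, h0⟩ := st4_main hnorm hmono hwa hwmax hwmin hAne hAcl hAΛ hμ0
      simp only [ContinuousMap.add_apply, ContinuousMap.const_apply] at h0
      exact ⟨y, hy, by simp only [mem_preimage, mem_Ici]; linarith⟩
    have hZdir : Directed (· ⊇ ·) Z := by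
      intro f g
      set k : C(K, ℝ) := (f + ContinuousMap.const K (-(μ f)))
        ⊓ (g + ContinuousMap.const K (-(μ g))) with hk
      have hkμ : μ k = 0 := by
        rw [hk, hpm, hwa, hwa]
        simp
      refine ⟨k, ?_, ?_⟩
      · rintro y ⟨hyA, hyk⟩
        simp only [mem_preimage, mem_Ici, hkμ, hk, ContinuousMap.inf_apply,
          ContinuousMap.add_apply, ContinuousMap.const_apply, le_min_iff] at hyk
        exact ⟨hyA, by simp only [mem_preimage, mem_Ici]; linarith [hyk.1]⟩
      · rintro y ⟨hyA, hyk⟩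
        simp only [mem_preimage, mem_Ici, hkμ, hk, ContinuousMap.inf_apply,
          ContinuousMap.add_apply, ContinuousMap.const_apply, le_min_iff] at hyk
        exact ⟨hyA, by simp only [mem_preimage, mem_Ici]; linarith [hyk.2]⟩
    obtain ⟨x, hx⟩ := IsCompact.nonempty_iInter_of_directed_nonempty_isCompact_isClosed
      Z hZdir hZne hZcp hZcl
    have hxA : x ∈ A := (mem_iInter.mp hx 0).1
    have hxall : ∀ f : C(K, ℝ), μ f ≤ f x := by
      intro f
      have := (mem_iInter.mp hx f).2
      simpa only [mem_preimage, mem_Ici] using this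
    exact ⟨x, hxA, st4_singleton hnorm hmono hwa hxall⟩
end

section
/- Let K be a nonempty compact Hausdorff space and let μ : C(K) → ℝ be a normed, weakly additive functional that preserves min and weakly preserves max. Then s(μ) := {x ∈ K : {x} ∈ Λ_μ} equals the support S(μ), and μ(f) = inf{f(x) : x ∈ S(μ)} for every f ∈ C(K). -/
set_option linter.unusedSectionVars false

open Set

variable {K : Type*} [TopologicalSpace K]

namespace Stmt5Aux

variable {K : Type*} [TopologicalSpace K] [CompactSpace K] [T2Space K] [Nonempty K]

/-- The candidate support set. -/
def Tset (μ : C(K, ℝ) → ℝ) : Set K := {x | ∀ g : C(K, ℝ), μ g ≤ g x}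

lemma Tclosed (μ : C(K, ℝ) → ℝ) : IsClosed (Tset μ) := by
  have h : Tset μ = ⋂ g : C(K, ℝ), {x | μ g ≤ g x} := by
    ext x; simp [Tset]
  rw [h]
  exact isClosed_iInter fun g => isClosed_le continuous_const g.continuous

lemma mono {μ : C(K, ℝ) → ℝ} (hpmin : PreservesMin μ) : IsMonotoneFunctional μ := by
  intro f g hfg
  have h : f ⊓ g = f := inf_eq_left.mpr hfg
  have h2 := hpmin f g
  rw [h] at h2
  rw [h2]
  exact min_le_right _ _

lemma const_eval {μ : C(K, ℝ) → ℝ} (hnorm : IsNormedFunctional μ) (hwa : IsWeaklyAdditive μ)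
    (c : ℝ) : μ (ContinuousMap.const K c) = c := by
  have h1 : (1 : C(K, ℝ)) + ContinuousMap.const K ((c : ℝ) - 1) = ContinuousMap.const K c := by
    ext x; simp
  have h2 := hwa 1 (c - 1)
  rw [h1, hnorm] at h2
  rw [h2]; ring

lemma inf'_apply {ι : Type*} (t : Finset ι) (ht : t.Nonempty) (v : ι → C(K, ℝ)) (x : K) :
    (t.inf' ht v) x = t.inf' ht (fun i => v i x) := by
  induction ht using Finset.Nonempty.cons_induction with
  | singleton i => simp
  | cons i s his hs ih => simp [Finset.inf'_cons, ih]

lemma mu_inf' {μ : C(K, ℝ) → ℝ} (hpmin : PreservesMin μ) {ι : Type*} (t : Finset ι)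
    (ht : t.Nonempty) (v : ι → C(K, ℝ)) (hv : ∀ i ∈ t, μ (v i) = 0) :
    μ (t.inf' ht v) = 0 := by
  induction ht using Finset.Nonempty.cons_induction with
  | singleton i => simpa using hv i (by simp)
  | cons i s his hs ih =>
      rw [Finset.inf'_cons, hpmin, hv i (by simp),
        ih fun j hj => hv j (Finset.mem_cons.mpr (Or.inr hj))]
      simp
      exact hs

lemma nonempty_le {μ : C(K, ℝ) → ℝ} (hnorm : IsNormedFunctional μ) (hwa : IsWeaklyAdditive μ)
    (hpmin : PreservesMin μ) (f : C(K, ℝ)) : ∃ x, f x ≤ μ f := by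
  by_contra hcon
  push_neg at hcon
  obtain ⟨x₀, -, hx₀⟩ := isCompact_univ.exists_isMinOn Set.univ_nonempty
    f.continuous.continuousOn
  have h2 : ContinuousMap.const K (f x₀) ≤ f := by
    intro y; exact hx₀ (Set.mem_univ y)
  have h3 := mono hpmin _ _ h2
  rw [const_eval hnorm hwa] at h3
  exact absurd h3 (not_le.mpr (hcon x₀))

/-- The key lemma: the infimum `μ f` is witnessed at a point of `Tset μ`. -/
lemma key {μ : C(K, ℝ) → ℝ} (hnorm : IsNormedFunctional μ) (hwa : IsWeaklyAdditive μ)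
    (hpmin : PreservesMin μ) (hwmax : WeaklyPreservesMax μ) (f : C(K, ℝ)) :
    ∃ x ∈ Tset μ, f x ≤ μ f := by
  by_contra hcon
  push_neg at hcon
  -- normalize: f' = f - μ f
  set f' : C(K, ℝ) := f + ContinuousMap.const K (-(μ f)) with hf'def
  have hf' : μ f' = 0 := by rw [hwa]; ring
  have hf'x : ∀ x, f' x = f x - μ f := by intro x; simp [hf'def]; ring
  set D : Set K := {x | f' x ≤ 0} with hD
  have hDclosed : IsClosed D := isClosed_le f'.continuous continuous_const
  have hDcpt : IsCompact D := hDclosed.isCompact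
  have hDne : D.Nonempty := by
    obtain ⟨x, hx⟩ := nonempty_le hnorm hwa hpmin f'
    exact ⟨x, by rw [hD]; simpa [hf'] using hx⟩
  have hg : ∀ x : D, ∃ g : C(K, ℝ), μ g = 0 ∧ g x < 0 := by
    rintro ⟨x, hx⟩
    have hxT : x ∉ Tset μ := by
      intro hxT
      have : f x ≤ μ f := by have := hx; rw [hD] at this; have := hf'x x; simp at this ⊢; linarith [hf'x x, (show f' x ≤ 0 from hx)]
      exact absurd this (not_le.mpr (hcon x hxT))
    simp only [Tset, Set.mem_setOf_eq, not_forall, not_le] at hxT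
    obtain ⟨g, hgx⟩ := hxT
    refine ⟨g + ContinuousMap.const K (-(μ g)), by rw [hwa]; ring, by simp; linarith⟩
  choose g hg0 hgneg using hg
  have hUopen : ∀ i : D, IsOpen {y | g i y < 0} :=
    fun i => isOpen_lt (g i).continuous continuous_const
  have hcover : D ⊆ ⋃ i : D, {y | g i y < 0} := by
    intro x hx
    exact Set.mem_iUnion.mpr ⟨⟨x, hx⟩, hgneg ⟨x, hx⟩⟩
  obtain ⟨t, ht⟩ := hDcpt.elim_finite_subcover _ hUopen hcover
  obtain ⟨x₀, hx₀⟩ := hDne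
  have htne : t.Nonempty := by
    obtain ⟨i, hit, -⟩ := Set.mem_iUnion₂.mp (ht hx₀)
    exact ⟨i, hit⟩
  set h₀ : C(K, ℝ) := t.inf' htne g with hh₀
  have hμh₀ : μ h₀ = 0 := mu_inf' hpmin t htne g fun i _ => hg0 i
  set h : C(K, ℝ) := h₀ ⊓ 0 with hh
  have hμ0 : μ (0 : C(K, ℝ)) = 0 := by
    have : (ContinuousMap.const K (0 : ℝ)) = (0 : C(K, ℝ)) := by ext x; simp
    rw [← this, const_eval hnorm hwa]
  have hμh : μ h = 0 := by rw [hh, hpmin, hμh₀, hμ0]; simp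
  have hhle : ∀ x, h x ≤ 0 := by intro x; simp [hh]
  have hhneg : ∀ x ∈ D, h x < 0 := by
    intro x hx
    obtain ⟨i, hit, hix⟩ := Set.mem_iUnion₂.mp (ht hx)
    have h1 : h₀ x ≤ g i x := by
      rw [hh₀, inf'_apply]
      exact Finset.inf'_le _ hit
    have h2 : g i x < 0 := hix
    have h3 : h x ≤ h₀ x := by simp [hh]
    linarith
  -- extract δ
  set ρ : C(K, ℝ) := (-h) ⊔ f' with hρ
  have hρpos : ∀ x, 0 < ρ x := by
    intro x
    rcases le_or_gt (f' x) 0 with h1 | h1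
    · have := hhneg x h1
      simp [hρ]; left; linarith
    · simp [hρ]; right; exact h1
  obtain ⟨x₁, -, hx₁⟩ := isCompact_univ.exists_isMinOn Set.univ_nonempty
    ρ.continuous.continuousOn
  set δ : ℝ := ρ x₁ with hδ
  have hδpos : 0 < δ := hρpos x₁
  have hsplit : ∀ x, h x ≤ -δ ∨ δ ≤ f' x := by
    intro x
    have h1 : δ ≤ ρ x := hx₁ (Set.mem_univ x)
    rw [hρ] at h1
    rcases le_max_iff.mp h1 with h2 | h2
    · left; simp at h2; linarith
    · right; exact h2
  -- the contradiction
  set w : C(K, ℝ) := (h ⊔ ContinuousMap.const K (-δ)) + ContinuousMap.const K δ with hw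
  have hμw : μ w = δ := by
    rw [hw, hwa, hwmax, hμh]
    rw [max_eq_left (by linarith)]; ring
  have hμφ : μ (f' ⊓ w) = 0 := by rw [hpmin, hf', hμw]; simp; linarith
  have hμφp : μ ((f' ⊓ w) ⊔ ContinuousMap.const K 0) = 0 := by
    rw [hwmax, hμφ]; simp
  have heq : (f' ⊓ w) ⊔ ContinuousMap.const K 0 = w := by
    ext x
    have hwx : w x = max (h x) (-δ) + δ := by simp [hw]
    simp only [ContinuousMap.sup_apply, ContinuousMap.inf_apply, ContinuousMap.const_apply]
    rcases hsplit x with h1 | h1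
    · have : w x = 0 := by rw [hwx, max_eq_right h1]; ring
      rw [this]
      rw [max_eq_right]
      exact min_le_right _ _
    · have hw1 : w x ≤ δ := by
        have h2 := hhle x
        have h3 : max (h x) (-δ) ≤ 0 := max_le h2 (by linarith)
        rw [hwx]; linarith
      have hw2 : 0 ≤ w x := by rw [hwx]; have : -δ ≤ max (h x) (-δ) := le_max_right _ _; linarith
      rw [min_eq_right (by linarith), max_eq_left hw2]
  rw [heq, hμw] at hμφp
  linarith

lemma representation {μ : C(K, ℝ) → ℝ} (hnorm : IsNormedFunctional μ) (hwa : IsWeaklyAdditive μ)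
    (hpmin : PreservesMin μ) (hwmax : WeaklyPreservesMax μ) (f : C(K, ℝ)) :
    μ f = sInf ((f : K → ℝ) '' Tset μ) := by
  obtain ⟨x₀, hx₀T, hx₀⟩ := key hnorm hwa hpmin hwmax f
  apply le_antisymm
  · apply le_csInf ⟨f x₀, Set.mem_image_of_mem _ hx₀T⟩
    rintro b ⟨y, hy, rfl⟩
    exact hy f
  · refine (csInf_le ⟨μ f, ?_⟩ (Set.mem_image_of_mem _ hx₀T)).trans hx₀
    rintro b ⟨y, hy, rfl⟩
    exact hy f

lemma supp_eq {μ : C(K, ℝ) → ℝ} (hnorm : IsNormedFunctional μ) (hwa : IsWeaklyAdditive μ)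
    (hpmin : PreservesMin μ) (hwmax : WeaklyPreservesMax μ) :
    functionalSupport μ = Tset μ := by
  apply Set.Subset.antisymm
  · intro x hx
    by_contra hxT
    obtain ⟨f, g, hfg, hne⟩ := hx (Tset μ)ᶜ (Tclosed μ).isOpen_compl hxT
    apply hne
    rw [representation hnorm hwa hpmin hwmax, representation hnorm hwa hpmin hwmax]
    congr 1
    apply Set.image_congr
    intro y hy
    exact hfg y (by simpa using hy)
  · intro x hx O hO hxO
    obtain ⟨u, hu0, hu1, hbd⟩ := exists_continuous_zero_one_of_isClosed hO.isClosed_compl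
      isClosed_singleton (Set.disjoint_singleton_right.mpr (by simpa using hxO))
    refine ⟨0, -u, fun y hy => ?_, ?_⟩
    · have : u y = 0 := hu0 hy
      simp [this]
    · have h1 : μ (-u) ≤ (-u) x := hx (-u)
      have h2 : u x = 1 := by simpa using hu1 (Set.mem_singleton x)
      have h3 : μ (0 : C(K, ℝ)) = 0 := by
        have : (ContinuousMap.const K (0 : ℝ)) = (0 : C(K, ℝ)) := by ext y; simp
        rw [← this, const_eval hnorm hwa]
      intro heq
      rw [h3] at heq
      simp [h2] at h1
      linarith [heq ▸ h1]

lemma sets_eq {μ : C(K, ℝ) → ℝ} (hnorm : IsNormedFunctional μ) (hwa : IsWeaklyAdditive μ)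
    (hpmin : PreservesMin μ) (hwmax : WeaklyPreservesMax μ) :
    {x : K | {x} ∈ LFamily μ} = Tset μ := by
  ext x
  constructor
  · rintro ⟨-, -, hL⟩
    by_contra hxT
    have hTne : (Tset μ).Nonempty := by
      obtain ⟨y, hy, -⟩ := key hnorm hwa hpmin hwmax 0
      exact ⟨y, hy⟩
    obtain ⟨g, hg0, -, hgpos⟩ := hL (Tset μ) (Tclosed μ)
      (by rw [Set.singleton_inter_eq_empty]; exact hxT)
    obtain ⟨y₀, hy₀T, hy₀⟩ := (Tclosed μ).isCompact.exists_isMinOn hTne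
      g.continuous.continuousOn
    have h1 : g y₀ ≤ sInf ((g : K → ℝ) '' Tset μ) := by
      apply le_csInf ⟨g y₀, Set.mem_image_of_mem _ hy₀T⟩
      rintro b ⟨y, hy, rfl⟩
      exact hy₀ hy
    have h2 := representation hnorm hwa hpmin hwmax g
    have h3 := hgpos y₀ hy₀T
    rw [hg0] at h2
    linarith
  · intro hx
    refine ⟨Set.singleton_nonempty x, isClosed_singleton, fun B hB hdis => ?_⟩
    have hxB : x ∉ B := by
      intro hxB
      have : x ∈ ({x} : Set K) ∩ B := ⟨rfl, hxB⟩
      rw [hdis] at this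
      exact this
    obtain ⟨u, hu0, hu1, hbd⟩ := exists_continuous_zero_one_of_isClosed isClosed_singleton hB
      (Set.disjoint_singleton_left.mpr hxB)
    have hux : u x = 0 := by simpa using hu0 (Set.mem_singleton x)
    refine ⟨u, ?_, ?_, ?_⟩
    · have h1 : μ u ≤ u x := hx u
      rw [hux] at h1
      have h2 : ContinuousMap.const K (0 : ℝ) ≤ u := by
        intro y; simpa using (hbd y).1
      have h3 := mono hpmin _ _ h2
      rw [const_eval hnorm hwa] at h3
      linarith
    · intro y hy
      rw [Set.mem_singleton_iff] at hy
      rw [hy, hux]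
    · intro y hy
      rw [show u y = 1 by simpa using hu1 hy]
      norm_num

end Stmt5Aux

/-- for a normed, weakly additive functional `μ` preserving min and weakly
preserving max, `s(μ) = S(μ)` and `μ f = inf {f x : x ∈ S(μ)}` for every `f`. -/
theorem statement5 {K : Type*} [TopologicalSpace K] [CompactSpace K] [T2Space K] [Nonempty K]
    (μ : C(K, ℝ) → ℝ) (hnorm : IsNormedFunctional μ) (hwa : IsWeaklyAdditive μ)
    (hpmin : PreservesMin μ) (hwmax : WeaklyPreservesMax μ) :
    {x : K | {x} ∈ LFamily μ} = functionalSupport μ ∧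
    ∀ f : C(K, ℝ), μ f = sInf ((f : K → ℝ) '' functionalSupport μ) := by
  have h1 := Stmt5Aux.sets_eq hnorm hwa hpmin hwmax
  have h2 := Stmt5Aux.supp_eq hnorm hwa hpmin hwmax
  refine ⟨by rw [h1, h2], fun f => ?_⟩
  rw [h2]
  exact Stmt5Aux.representation hnorm hwa hpmin hwmax f
end

section
/- Let K be a nonempty compact Hausdorff space and let μ : C(K) → ℝ be a normed, weakly additive functional that preserves max and weakly preserves min. Then μ(f) = sup{f(x) : x ∈ S(μ)} for every f ∈ C(K), where S(μ) is the (nonempty) support of μ. -/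
set_option linter.unusedSectionVars false


open Set

variable {K : Type*} [TopologicalSpace K]

section Aux

variable {K : Type*} [TopologicalSpace K] [CompactSpace K] [T2Space K] [Nonempty K]
  {μ : C(K, ℝ) → ℝ}

lemma auxMono (hpmax : PreservesMax μ) {f g : C(K, ℝ)} (h : f ≤ g) : μ f ≤ μ g := by
  have h2 := hpmax f g
  rw [sup_eq_right.mpr h] at h2
  rw [h2]; exact le_max_left _ _

lemma auxConst (hnorm : IsNormedFunctional μ) (hwa : IsWeaklyAdditive μ) (c : ℝ) :
    μ (ContinuousMap.const K c) = c := by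
  have h0 : μ 0 = 0 := by
    have h := hwa 0 1
    have h1 : (0 : C(K, ℝ)) + ContinuousMap.const K 1 = 1 := by ext x; simp
    rw [h1] at h
    have : μ (1 : C(K, ℝ)) = 1 := hnorm
    linarith
  have h := hwa 0 c
  have h1 : (0 : C(K, ℝ)) + ContinuousMap.const K c = ContinuousMap.const K c := by ext x; simp
  rw [h1] at h
  rw [h, h0, zero_add]

lemma auxMax (f : C(K, ℝ)) : ∃ x, ∀ y, f y ≤ f x := by
  obtain ⟨x, -, hx⟩ := isCompact_univ.exists_isMaxOn univ_nonempty f.continuous.continuousOn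
  exact ⟨x, fun y => hx (mem_univ y)⟩

/-- Core lemma: if `f ≤ μ f` pointwise, then for every `ε > 0` and every `g` there is a
point `y` with `f y ≥ μ f - ε` and `g y ≤ μ g`. -/
lemma lemA (hnorm : IsNormedFunctional μ) (hwa : IsWeaklyAdditive μ)
    (hpmax : PreservesMax μ) (hwmin : WeaklyPreservesMin μ)
    (f g : C(K, ℝ)) (hf : ∀ y, f y ≤ μ f) {ε : ℝ} (hε : 0 < ε) :
    ∃ y, μ f - ε ≤ f y ∧ g y ≤ μ g := by
  set c := μ f with hc
  -- W := {y | c - ε ≤ f y} is nonempty compact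
  have hWc : IsClosed {y | c - ε ≤ f y} := isClosed_le continuous_const f.continuous
  have hWne : {y | c - ε ≤ f y}.Nonempty := by
    obtain ⟨x, hx⟩ := auxMax f
    have hcx : c ≤ f x := le_trans (auxMono hpmax (g := ContinuousMap.const K (f x))
      (fun y => hx y)) (le_of_eq (auxConst hnorm hwa (f x)))
    exact ⟨x, by simp only [mem_setOf_eq]; linarith⟩
  -- maximize f - g on W
  obtain ⟨y₀, hy₀W, hy₀⟩ := (hWc.isCompact).exists_isMaxOn hWne
    ((f.continuous.sub g.continuous).continuousOn)
  set s := f y₀ - g y₀ with hs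
  set w := (f ⊓ ContinuousMap.const K (c - ε)) ⊔ (g + ContinuousMap.const K s) with hw
  have hfw : f ≤ w := by
    intro y
    by_cases hy : f y ≤ c - ε
    · calc f y = min (f y) (c - ε) := (min_eq_left hy).symm
        _ ≤ w y := by
            rw [hw]
            simp only [ContinuousMap.sup_apply, ContinuousMap.inf_apply,
              ContinuousMap.add_apply, ContinuousMap.const_apply]
            exact le_max_left _ _
    · push_neg at hy
      have hyW : y ∈ {y | c - ε ≤ f y} := le_of_lt hy
      have h3 : f y - g y ≤ f y₀ - g y₀ := hy₀ hyW
      calc f y ≤ g y + s := by rw [hs]; linarith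
        _ ≤ w y := by
            rw [hw]
            simp only [ContinuousMap.sup_apply, ContinuousMap.inf_apply,
              ContinuousMap.add_apply, ContinuousMap.const_apply]
            exact le_max_right _ _
  have hμw : μ w = max (c - ε) (μ g + s) := by
    rw [hw, hpmax, hwmin, hwa, ← hc]
    congr 1
    rw [min_eq_right (by linarith : c - ε ≤ c)]
  have hcw : c ≤ μ w := hc ▸ auxMono hpmax hfw
  rw [hμw] at hcw
  rcases le_max_iff.mp hcw with h | h
  · linarith
  · exact ⟨y₀, hy₀W, by have := hf y₀; rw [hs] at h; linarith⟩


/-- If `f ≤ μ f` pointwise, there is a point where `f` attains `μ f` and `g ≤ μ g`. -/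
lemma lemA' (hnorm : IsNormedFunctional μ) (hwa : IsWeaklyAdditive μ)
    (hpmax : PreservesMax μ) (hwmin : WeaklyPreservesMin μ)
    (f g : C(K, ℝ)) (hf : ∀ y, f y ≤ μ f) :
    ∃ y, μ f ≤ f y ∧ g y ≤ μ g := by
  have hAc : IsClosed {y | g y ≤ μ g} := isClosed_le g.continuous continuous_const
  have hAne : {y | g y ≤ μ g}.Nonempty := by
    obtain ⟨y, -, hy⟩ := lemA hnorm hwa hpmax hwmin f g hf one_pos
    exact ⟨y, hy⟩
  obtain ⟨y₀, hy₀A, hy₀⟩ := (hAc.isCompact).exists_isMaxOn hAne f.continuous.continuousOn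
  refine ⟨y₀, ?_, hy₀A⟩
  by_contra h
  push_neg at h
  obtain ⟨y, hy1, hy2⟩ := lemA hnorm hwa hpmax hwmin f g hf (ε := (μ f - f y₀)/2) (by linarith)
  have h3 : f y ≤ f y₀ := hy₀ hy2
  linarith

/-- The candidate support set: points where every `g` is dominated by `μ g`. -/
lemma lemC (hnorm : IsNormedFunctional μ) (hwa : IsWeaklyAdditive μ)
    (hpmax : PreservesMax μ) (hwmin : WeaklyPreservesMin μ) (f : C(K, ℝ)) :
    ∃ y, (∀ g : C(K, ℝ), g y ≤ μ g) ∧ μ f ≤ f y := by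
  by_contra hcon
  push_neg at hcon
  -- F := {y | μ f ≤ f y}
  set F : Set K := {y | μ f ≤ f y} with hF
  have hFc : IsClosed F := isClosed_le continuous_const f.continuous
  have hFne : F.Nonempty := by
    obtain ⟨x, hx⟩ := auxMax f
    exact ⟨x, le_trans (auxMono hpmax (g := ContinuousMap.const K (f x)) (fun y => hx y))
      (le_of_eq (auxConst hnorm hwa (f x)))⟩
  -- every point of F admits a bad g
  have hbad : ∀ y : F, ∃ g : C(K, ℝ), μ g < g y := by
    rintro ⟨y, hy⟩
    by_contra hb
    push_neg at hb
    exact absurd (hcon y hb) (not_lt.mpr hy)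
  choose G hG using hbad
  set U : F → Set K := fun i => {z | μ (G i) < (G i) z} with hU
  have hUo : ∀ i, IsOpen (U i) := fun i => isOpen_lt continuous_const (G i).continuous
  have hcover : F ⊆ ⋃ i, U i := fun y hy => mem_iUnion.mpr ⟨⟨y, hy⟩, hG ⟨y, hy⟩⟩
  obtain ⟨t, ht⟩ := hFc.isCompact.elim_finite_subcover U hUo hcover
  have htne : t.Nonempty := by
    obtain ⟨x, hx⟩ := hFne
    obtain ⟨i, hit, -⟩ := mem_iUnion₂.mp (ht hx)
    exact ⟨i, hit⟩
  set g : C(K, ℝ) := t.sup' htne (fun i => G i + ContinuousMap.const K (-(μ (G i)))) with hg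
  have hμg : μ g = 0 := by
    rw [hg, Finset.comp_sup'_eq_sup'_comp htne μ (fun a b => hpmax a b)]
    have h1 : ∀ i ∈ t, (μ ∘ fun i => G i + ContinuousMap.const K (-(μ (G i)))) i = 0 := by
      intro i _
      simp only [Function.comp_apply]
      rw [hwa]; ring
    rw [Finset.sup'_congr htne rfl h1, Finset.sup'_const]
  -- f' := f ⊓ const (μ f)
  set f' : C(K, ℝ) := f ⊓ ContinuousMap.const K (μ f) with hf'
  have hμf' : μ f' = μ f := by rw [hf', hwmin, min_self]
  have hf'le : ∀ y, f' y ≤ μ f' := by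
    intro y
    rw [hμf', hf']
    simp only [ContinuousMap.inf_apply, ContinuousMap.const_apply]
    exact min_le_right _ _
  obtain ⟨y, hy1, hy2⟩ := lemA' hnorm hwa hpmax hwmin f' g hf'le
  -- y ∈ F
  have hyF : y ∈ F := by
    rw [hμf', hf'] at hy1
    simp only [ContinuousMap.inf_apply, ContinuousMap.const_apply] at hy1
    exact le_trans hy1 (min_le_left _ _)
  obtain ⟨i, hit, hiy⟩ := mem_iUnion₂.mp (ht hyF)
  have hle : (G i + ContinuousMap.const K (-(μ (G i)))) ≤ g :=
    hg ▸ Finset.le_sup' (fun i => G i + ContinuousMap.const K (-(μ (G i)))) hit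
  have h5 : (G i) y + -(μ (G i)) ≤ g y := hle y
  have h6 : μ (G i) < (G i) y := hiy
  rw [hμg] at hy2
  linarith


/-- Representation over the candidate set `T = {y | ∀ g, g y ≤ μ g}`. -/
lemma lemRep (hnorm : IsNormedFunctional μ) (hwa : IsWeaklyAdditive μ)
    (hpmax : PreservesMax μ) (hwmin : WeaklyPreservesMin μ) (f : C(K, ℝ)) :
    μ f = sSup ((f : K → ℝ) '' {y | ∀ g : C(K, ℝ), g y ≤ μ g}) := by
  obtain ⟨y₀, hy₀T, hy₀⟩ := lemC hnorm hwa hpmax hwmin f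
  have hbdd : BddAbove ((f : K → ℝ) '' {y | ∀ g : C(K, ℝ), g y ≤ μ g}) := by
    refine ⟨μ f, ?_⟩
    rintro v ⟨y, hy, rfl⟩
    exact hy f
  have hne : ((f : K → ℝ) '' {y | ∀ g : C(K, ℝ), g y ≤ μ g}).Nonempty := ⟨f y₀, y₀, hy₀T, rfl⟩
  apply le_antisymm
  · exact le_trans hy₀ (le_csSup hbdd ⟨y₀, hy₀T, rfl⟩)
  · exact csSup_le hne (by rintro v ⟨y, hy, rfl⟩; exact hy f)

/-- The support coincides with the candidate set. -/
lemma lemSupp (hnorm : IsNormedFunctional μ) (hwa : IsWeaklyAdditive μ)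
    (hpmax : PreservesMax μ) (hwmin : WeaklyPreservesMin μ) :
    functionalSupport μ = {y | ∀ g : C(K, ℝ), g y ≤ μ g} := by
  ext x
  constructor
  · intro hx
    by_contra hb
    simp only [mem_setOf_eq, not_forall, not_le] at hb
    obtain ⟨g, hg⟩ := hb
    obtain ⟨f₁, f₂, hagree, hne⟩ := hx {z | μ g < g z}
      (isOpen_lt continuous_const g.continuous) hg
    apply hne
    rw [lemRep hnorm hwa hpmax hwmin f₁, lemRep hnorm hwa hpmax hwmin f₂]
    congr 1
    apply image_congr
    intro y hy
    exact hagree y (not_lt.mpr (hy g))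
  · intro hx O hO hxO
    obtain ⟨φ, hφ0, hφ1, hφ01⟩ := exists_continuous_zero_one_of_isClosed
      (isClosed_compl_iff.mpr hO) (isClosed_singleton (x := x))
      (disjoint_left.mpr fun y hy hy2 => hy (hy2 ▸ hxO))
    refine ⟨φ, 0, fun y hy => ?_, ?_⟩
    · rw [hφ0 hy]; rfl
    · have h1 : (1 : ℝ) ≤ μ φ := by
        have := hx φ
        rw [hφ1 rfl] at this
        simpa using this
      have h0 : μ (0 : C(K, ℝ)) = 0 := by
        have h := hwa 0 1
        have h1' : (0 : C(K, ℝ)) + ContinuousMap.const K 1 = 1 := by ext z; simp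
        rw [h1'] at h
        have : μ (1 : C(K, ℝ)) = 1 := hnorm
        linarith
      rw [h0]
      linarith

end Aux

/-- for a normed, weakly additive functional `μ` preserving max and weakly
preserving min, the support `S(μ)` is nonempty and `μ f = sup {f x : x ∈ S(μ)}`. -/
theorem statement6 {K : Type*} [TopologicalSpace K] [CompactSpace K] [T2Space K] [Nonempty K]
    (μ : C(K, ℝ) → ℝ) (hnorm : IsNormedFunctional μ) (hwa : IsWeaklyAdditive μ)
    (hpmax : PreservesMax μ) (hwmin : WeaklyPreservesMin μ) :
    (functionalSupport μ).Nonempty ∧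
    ∀ f : C(K, ℝ), μ f = sSup ((f : K → ℝ) '' functionalSupport μ) := by
  rw [lemSupp hnorm hwa hpmax hwmin]
  constructor
  · obtain ⟨y, hy, -⟩ := lemC hnorm hwa hpmax hwmin 1
    exact ⟨y, hy⟩
  · exact fun f => lemRep hnorm hwa hpmax hwmin f
end
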